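/- Let M ∈ ℝ^{4m×4n} be a JRS-symmetric matrix. Then there exists an orthogonally JRS-symplectic matrix W ∈ ℝ^{4m×4m} such that Wᵀ M = R ∈ ℝ^{4m×4n} is an upper JRS-triangular matrix. -/

import Mathlib

open Matrix Quaternion
open scoped Kronecker Quaternion

noncomputable section

/-- The 4×4 coefficient matrix of `J`. -/
def Jb : Matrix (Fin 4) (Fin 4) ℝ := !![0,0,-1,0; 0,0,0,-1; 1,0,0,0; 0,1,0,0]
/-- The 4×4 coefficient matrix of `R`. -/
def Rb : Matrix (Fin 4) (Fin 4) ℝ := !![0,-1,0,0; 1,0,0,0; 0,0,0,1; 0,0,-1,0]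
/-- The 4×4 coefficient matrix of `S`. -/
def Sb : Matrix (Fin 4) (Fin 4) ℝ := !![0,0,0,-1; 0,0,1,0; 0,-1,0,0; 1,0,0,0]

/-- `J_n = [[0,0,−I_n,0],[0,0,0,−I_n],[I_n,0,0,0],[0,I_n,0,0]]`. -/
def JJ (n : ℕ) : Matrix (Fin 4 × Fin n) (Fin 4 × Fin n) ℝ :=
  Jb ⊗ₖ (1 : Matrix (Fin n) (Fin n) ℝ)
/-- `R_n = [[0,−I_n,0,0],[I_n,0,0,0],[0,0,0,I_n],[0,0,−I_n,0]]`. -/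
def RRm (n : ℕ) : Matrix (Fin 4 × Fin n) (Fin 4 × Fin n) ℝ :=
  Rb ⊗ₖ (1 : Matrix (Fin n) (Fin n) ℝ)
/-- `S_n = [[0,0,0,−I_n],[0,0,I_n,0],[0,−I_n,0,0],[I_n,0,0,0]]`. -/
def SSm (n : ℕ) : Matrix (Fin 4 × Fin n) (Fin 4 × Fin n) ℝ :=
  Sb ⊗ₖ (1 : Matrix (Fin n) (Fin n) ℝ)

/-- A real 4m×4n matrix `M` is JRS-symmetric if `J_m M J_nᵀ = M`,
`R_m M R_nᵀ = M` and `S_m M S_nᵀ = M`. -/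
def JRSSymmetric {m n : ℕ} (M : Matrix (Fin 4 × Fin m) (Fin 4 × Fin n) ℝ) : Prop :=
  JJ m * M * (JJ n)ᵀ = M ∧ RRm m * M * (RRm n)ᵀ = M ∧ SSm m * M * (SSm n)ᵀ = M

/-- A real 4m×4n matrix `O` is JRS-symplectic if `O J_n Oᵀ = J_m`,
`O R_n Oᵀ = R_m` and `O S_n Oᵀ = S_m`. -/
def JRSSymplectic {m n : ℕ} (O : Matrix (Fin 4 × Fin m) (Fin 4 × Fin n) ℝ) : Prop :=
  O * JJ n * Oᵀ = JJ m ∧ O * RRm n * Oᵀ = RRm m ∧ O * SSm n * Oᵀ = SSm m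

/-- A real 4n×4n matrix is orthogonally JRS-symplectic if it is orthogonal
and JRS-symplectic. -/
def OrthoJRSSymplectic {n : ℕ} (W : Matrix (Fin 4 × Fin n) (Fin 4 × Fin n) ℝ) : Prop :=
  Wᵀ * W = 1 ∧ JRSSymplectic W

/-- The 4m×4n block matrix
`[[Q₀,Q₂,Q₁,Q₃],[−Q₂,Q₀,Q₃,−Q₁],[−Q₁,−Q₃,Q₀,Q₂],[−Q₃,Q₁,−Q₂,Q₀]]`. -/
def upsilonBlocks {m n : ℕ} (Q0 Q1 Q2 Q3 : Matrix (Fin m) (Fin n) ℝ) :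
    Matrix (Fin 4 × Fin m) (Fin 4 × Fin n) ℝ := fun p q =>
  !![Q0 p.2 q.2, Q2 p.2 q.2, Q1 p.2 q.2, Q3 p.2 q.2;
     -(Q2 p.2 q.2), Q0 p.2 q.2, Q3 p.2 q.2, -(Q1 p.2 q.2);
     -(Q1 p.2 q.2), -(Q3 p.2 q.2), Q0 p.2 q.2, Q2 p.2 q.2;
     -(Q3 p.2 q.2), Q1 p.2 q.2, -(Q2 p.2 q.2), Q0 p.2 q.2] p.1 q.1

/-- The real counterpart `Υ_Q` of a quaternion matrix `Q`. -/
def Upsilon {m n : ℕ} (Q : Matrix (Fin m) (Fin n) ℍ[ℝ]) :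
    Matrix (Fin 4 × Fin m) (Fin 4 × Fin n) ℝ :=
  upsilonBlocks (fun i j => (Q i j).re) (fun i j => (Q i j).imI)
    (fun i j => (Q i j).imJ) (fun i j => (Q i j).imK)

/-- Upper Hessenberg: zero below the first subdiagonal. -/
def UpperHessenbergM {n : ℕ} (A : Matrix (Fin n) (Fin n) ℝ) : Prop :=
  ∀ i j : Fin n, (j : ℕ) + 1 < (i : ℕ) → A i j = 0

/-- Upper triangular: zero below the diagonal. -/
def UpperTriangularM {m n : ℕ} (A : Matrix (Fin m) (Fin n) ℝ) : Prop :=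
  ∀ (i : Fin m) (j : Fin n), (j : ℕ) < (i : ℕ) → A i j = 0

/-- Strictly upper triangular: zero on and below the diagonal. -/
def StrictlyUpperTriangularM {m n : ℕ} (A : Matrix (Fin m) (Fin n) ℝ) : Prop :=
  ∀ (i : Fin m) (j : Fin n), (j : ℕ) ≤ (i : ℕ) → A i j = 0

/-- Tridiagonal: zero outside the three central diagonals. -/
def TridiagonalM {n : ℕ} (A : Matrix (Fin n) (Fin n) ℝ) : Prop :=
  ∀ i j : Fin n, ((i : ℕ) + 1 < (j : ℕ) ∨ (j : ℕ) + 1 < (i : ℕ)) → A i j = 0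


def phiQ (q : ℍ[ℝ]) : Matrix (Fin 4) (Fin 4) ℝ :=
  !![q.re, q.imJ, q.imI, q.imK;
     -q.imJ, q.re, q.imK, -q.imI;
     -q.imI, -q.imK, q.re, q.imJ;
     -q.imK, q.imI, -q.imJ, q.re]

lemma phiQ_zero : phiQ 0 = 0 := by
  ext a b; fin_cases a <;> fin_cases b <;> simp [phiQ, Matrix.zero_apply, vecHead, vecTail]

lemma phiQ_one : phiQ 1 = 1 := by
  ext a b; fin_cases a <;> fin_cases b <;> simp [phiQ, Matrix.one_apply, vecHead, vecTail, Function.comp]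

lemma phiQ_add (p q : ℍ[ℝ]) : phiQ (p + q) = phiQ p + phiQ q := by
  ext a b; fin_cases a <;> fin_cases b <;> simp [phiQ, Matrix.zero_apply, vecHead, vecTail] <;> ring

lemma phiQ_mul (p q : ℍ[ℝ]) : phiQ (p * q) = phiQ p * phiQ q := by
  ext a b; fin_cases a <;> fin_cases b <;>
    simp [phiQ, vecHead, vecTail, Matrix.mul_apply, Fin.sum_univ_four, Quaternion.re_mul,
      Quaternion.imI_mul, Quaternion.imJ_mul, Quaternion.imK_mul] <;> ring

lemma phiQ_star (q : ℍ[ℝ]) : phiQ (star q) = (phiQ q)ᵀ := by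
  ext a b; fin_cases a <;> fin_cases b <;>
    simp [phiQ, Quaternion.re_star, Quaternion.imI_star, Quaternion.imJ_star,
      Quaternion.imK_star]

lemma Jb_phiQ (q : ℍ[ℝ]) : Jb * phiQ q = phiQ q * Jb := by
  ext a b; fin_cases a <;> fin_cases b <;>
    simp [phiQ, vecHead, vecTail, Jb, Matrix.mul_apply, Fin.sum_univ_four]

lemma Rb_phiQ (q : ℍ[ℝ]) : Rb * phiQ q = phiQ q * Rb := by
  ext a b; fin_cases a <;> fin_cases b <;>
    simp [phiQ, vecHead, vecTail, Rb, Matrix.mul_apply, Fin.sum_univ_four]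

lemma Sb_phiQ (q : ℍ[ℝ]) : Sb * phiQ q = phiQ q * Sb := by
  ext a b; fin_cases a <;> fin_cases b <;>
    simp [phiQ, vecHead, vecTail, Sb, Matrix.mul_apply, Fin.sum_univ_four]
lemma Upsilon_apply {m n : ℕ} (Q : Matrix (Fin m) (Fin n) ℍ[ℝ]) (p : Fin 4 × Fin m)
    (r : Fin 4 × Fin n) : Upsilon Q p r = phiQ (Q p.2 r.2) p.1 r.1 := rfl

lemma phiQ_sum {ι : Type*} (s : Finset ι) (f : ι → ℍ[ℝ]) :
    phiQ (∑ k ∈ s, f k) = ∑ k ∈ s, phiQ (f k) := by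
  classical
  induction s using Finset.induction_on with
  | empty => simp [phiQ_zero]
  | insert _ _ h ih => simp [Finset.sum_insert h, phiQ_add, ih]

lemma Upsilon_mul {m n p : ℕ} (A : Matrix (Fin m) (Fin n) ℍ[ℝ])
    (B : Matrix (Fin n) (Fin p) ℍ[ℝ]) :
    Upsilon (A * B) = Upsilon A * Upsilon B := by
  ext ⟨a, i⟩ ⟨b, j⟩
  rw [Matrix.mul_apply, Upsilon_apply, Matrix.mul_apply, phiQ_sum]
  rw [Fintype.sum_prod_type]
  rw [Finset.sum_comm]
  simp only [Upsilon_apply]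
  rw [Matrix.sum_apply]
  congr 1
  ext k
  rw [phiQ_mul, Matrix.mul_apply]

lemma Upsilon_one {m : ℕ} : Upsilon (1 : Matrix (Fin m) (Fin m) ℍ[ℝ]) = 1 := by
  ext ⟨a, i⟩ ⟨b, j⟩
  rw [Upsilon_apply]
  by_cases h : i = j
  · subst h
    simp only [Matrix.one_apply_eq, phiQ_one]
    by_cases hab : a = b
    · subst hab; simp [Matrix.one_apply]
    · simp [Matrix.one_apply, hab]
  · rw [Matrix.one_apply_ne h, phiQ_zero]
    simp [Matrix.one_apply, Prod.ext_iff, h]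

lemma Upsilon_conjTranspose {m n : ℕ} (A : Matrix (Fin m) (Fin n) ℍ[ℝ]) :
    Upsilon Aᴴ = (Upsilon A)ᵀ := by
  ext ⟨a, i⟩ ⟨b, j⟩
  rw [Upsilon_apply, Matrix.transpose_apply, Upsilon_apply]
  simp only [Matrix.conjTranspose_apply]
  rw [phiQ_star, Matrix.transpose_apply]

lemma kron_mul_Upsilon {m n : ℕ} (Kb : Matrix (Fin 4) (Fin 4) ℝ)
    (hK : ∀ q, Kb * phiQ q = phiQ q * Kb) (Q : Matrix (Fin m) (Fin n) ℍ[ℝ]) :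
    (Kb ⊗ₖ (1 : Matrix (Fin m) (Fin m) ℝ)) * Upsilon Q
      = Upsilon Q * (Kb ⊗ₖ (1 : Matrix (Fin n) (Fin n) ℝ)) := by
  ext ⟨a, i⟩ ⟨b, j⟩
  rw [Matrix.mul_apply, Matrix.mul_apply]
  rw [Fintype.sum_prod_type, Fintype.sum_prod_type]
  simp only [Matrix.kroneckerMap_apply, Upsilon_apply, Matrix.one_apply]
  simp only [mul_ite, mul_one, mul_zero, ite_mul, zero_mul, one_mul]
  simp only [Finset.sum_ite_eq, Finset.sum_ite_eq', Finset.mem_univ, if_true]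
  have := congrArg (fun M => M a b) (hK (Q i j))
  simpa [Matrix.mul_apply] using this
lemma kron_sandwich_entry {m n : ℕ} (Kb : Matrix (Fin 4) (Fin 4) ℝ)
    (M : Matrix (Fin 4 × Fin m) (Fin 4 × Fin n) ℝ) (a b : Fin 4) (i : Fin m) (j : Fin n) :
    ((Kb ⊗ₖ (1 : Matrix (Fin m) (Fin m) ℝ)) * M * (Kb ⊗ₖ (1 : Matrix (Fin n) (Fin n) ℝ))ᵀ)
        (a, i) (b, j)
      = ∑ c, ∑ d, Kb a c * Kb b d * M (c, i) (d, j) := by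
  rw [Matrix.mul_apply]
  rw [Fintype.sum_prod_type]
  simp only [Matrix.mul_apply, Matrix.transpose_apply, Matrix.kroneckerMap_apply,
    Matrix.one_apply, Fintype.sum_prod_type]
  simp only [mul_ite, mul_one, mul_zero, ite_mul, zero_mul, one_mul,
    Finset.sum_ite_eq, Finset.sum_ite_eq', Finset.mem_univ, if_true,
    Finset.mul_sum, Finset.sum_mul]
  rw [Finset.sum_comm]
  congr 1; ext d; congr 1; ext c; ring

set_option maxHeartbeats 1000000 in
lemma jrs_exists_Q {m n : ℕ} (M : Matrix (Fin 4 × Fin m) (Fin 4 × Fin n) ℝ)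
    (hM : JRSSymmetric M) : ∃ Q : Matrix (Fin m) (Fin n) ℍ[ℝ], M = Upsilon Q := by
  obtain ⟨hJ, hR, hS⟩ := hM
  refine ⟨fun i j => ⟨M (0, i) (0, j), M (0, i) (2, j), M (0, i) (1, j), M (0, i) (3, j)⟩, ?_⟩
  ext ⟨a, i⟩ ⟨b, j⟩
  have eJ : ∀ a b : Fin 4, (∑ c, ∑ d, Jb a c * Jb b d * M (c, i) (d, j)) = M (a, i) (b, j) := by
    intro a b
    have := congrFun (congrFun hJ (a, i)) (b, j)
    rw [show JJ m = Jb ⊗ₖ (1 : Matrix (Fin m) (Fin m) ℝ) from rfl,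
        show JJ n = Jb ⊗ₖ (1 : Matrix (Fin n) (Fin n) ℝ) from rfl,
        kron_sandwich_entry] at this
    exact this
  have eR : ∀ a b : Fin 4, (∑ c, ∑ d, Rb a c * Rb b d * M (c, i) (d, j)) = M (a, i) (b, j) := by
    intro a b
    have := congrFun (congrFun hR (a, i)) (b, j)
    rw [show RRm m = Rb ⊗ₖ (1 : Matrix (Fin m) (Fin m) ℝ) from rfl,
        show RRm n = Rb ⊗ₖ (1 : Matrix (Fin n) (Fin n) ℝ) from rfl,
        kron_sandwich_entry] at this
    exact this
  have eS : ∀ a b : Fin 4, (∑ c, ∑ d, Sb a c * Sb b d * M (c, i) (d, j)) = M (a, i) (b, j) := by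
    intro a b
    have := congrFun (congrFun hS (a, i)) (b, j)
    rw [show SSm m = Sb ⊗ₖ (1 : Matrix (Fin m) (Fin m) ℝ) from rfl,
        show SSm n = Sb ⊗ₖ (1 : Matrix (Fin n) (Fin n) ℝ) from rfl,
        kron_sandwich_entry] at this
    exact this
  have h10 := eR 1 0
  simp [Fin.sum_univ_four, Rb] at h10
  have h11 := eR 1 1
  simp [Fin.sum_univ_four, Rb] at h11
  have h12 := eR 1 2
  simp [Fin.sum_univ_four, Rb] at h12
  have h13 := eR 1 3
  simp [Fin.sum_univ_four, Rb] at h13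
  have h20 := eJ 2 0
  simp [Fin.sum_univ_four, Jb] at h20
  have h21 := eJ 2 1
  simp [Fin.sum_univ_four, Jb] at h21
  have h22 := eJ 2 2
  simp [Fin.sum_univ_four, Jb] at h22
  have h23 := eJ 2 3
  simp [Fin.sum_univ_four, Jb] at h23
  have h30 := eS 3 0
  simp [Fin.sum_univ_four, Sb] at h30
  have h31 := eS 3 1
  simp [Fin.sum_univ_four, Sb] at h31
  have h32 := eS 3 2
  simp [Fin.sum_univ_four, Sb] at h32
  have h33 := eS 3 3
  simp [Fin.sum_univ_four, Sb] at h33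
  clear eJ eR eS hJ hR hS
  show M (a, i) (b, j) = phiQ (⟨M (0, i) (0, j), M (0, i) (2, j), M (0, i) (1, j), M (0, i) (3, j)⟩ : ℍ[ℝ]) a b
  fin_cases a <;> fin_cases b <;>
    simp [phiQ] <;>
    linarith [h10, h11, h12, h13, h20, h21, h22, h23, h30, h31, h32, h33]

lemma quat_coe_sum {ι : Type*} (s : Finset ι) (f : ι → ℝ) :
    ((∑ x ∈ s, f x : ℝ) : ℍ[ℝ]) = ∑ x ∈ s, ((f x : ℝ) : ℍ[ℝ]) := by
  classical
  induction s using Finset.induction_on with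
  | empty => simp
  | insert _ _ h ih => rw [Finset.sum_insert h, Finset.sum_insert h, Quaternion.coe_add, ih]

set_option maxHeartbeats 1000000 in
lemma quat_qr_aux {m n : ℕ} (Q : Matrix (Fin m) (Fin n) ℍ[ℝ]) (k : ℕ) :
    ∃ W : Matrix (Fin m) (Fin m) ℍ[ℝ],
      Wᴴ * W = 1 ∧
      (∀ (i : Fin m) (j : Fin n), (j : ℕ) < k → (j : ℕ) < (i : ℕ) → (Wᴴ * Q) i j = 0) ∧
      (∀ (i : Fin m) (j : Fin n), (j : ℕ) < k → (i : ℕ) = (j : ℕ) →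
        ∃ r : ℝ, (Wᴴ * Q) i j = (r : ℍ[ℝ])) := by
  classical
  induction k with
  | zero =>
    exact ⟨1, by simp, fun i j hj => absurd hj (Nat.not_lt_zero _),
      fun i j hj => absurd hj (Nat.not_lt_zero _)⟩
  | succ k ih =>
    obtain ⟨W, hW, hlow, hdiag⟩ := ih
    by_cases hkn : k < n
    swap
    · refine ⟨W, hW, fun i j hj hji => hlow i j (by omega) hji,
        fun i j hj hij => hdiag i j (by omega) hij⟩
    by_cases hkm : k < m
    swap
    · refine ⟨W, hW, fun i j hj hji => ?_, fun i j hj hij => ?_⟩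
      · rcases Nat.lt_or_ge (j : ℕ) k with h | h
        · exact hlow i j h hji
        · exact absurd i.isLt (by omega)
      · rcases Nat.lt_or_ge (j : ℕ) k with h | h
        · exact hdiag i j h hij
        · exact absurd i.isLt (by omega)
    -- main case
    set T := Wᴴ * Q with hT
    set km : Fin m := ⟨k, hkm⟩ with hkmdef
    set kc : Fin n := ⟨k, hkn⟩ with hkcdef
    set v : Fin m → ℍ[ℝ] := fun i => if k ≤ (i : ℕ) then T i kc else 0 with hv
    set a : ℍ[ℝ] := T km kc with ha
    have hva : v km = a := by rw [hv]; simp; exact if_pos le_rfl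
    set S : ℝ := ∑ i, normSq (v i) with hSdef
    have hS : 0 ≤ S := Finset.sum_nonneg fun i _ => normSq_nonneg
    set ν : ℝ := Real.sqrt S with hνdef
    have hν : ν ^ 2 = S := Real.sq_sqrt hS
    set q : ℍ[ℝ] := if a = 0 then ((ν : ℝ) : ℍ[ℝ]) else (ν / ‖a‖) • a with hq
    have key1 : star q * a = ((ν * ‖a‖ : ℝ) : ℍ[ℝ]) := by
      by_cases h0 : a = 0
      · simp [hq, h0]
      · rw [hq, if_neg h0, Quaternion.star_smul, smul_mul_assoc,
          Quaternion.star_mul_self, Quaternion.smul_coe]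
        congr 1
        rw [Quaternion.normSq_eq_norm_mul_self]
        have hna : ‖a‖ ≠ 0 := norm_ne_zero_iff.mpr h0
        field_simp
    have key1' : star a * q = ((ν * ‖a‖ : ℝ) : ℍ[ℝ]) := by
      by_cases h0 : a = 0
      · simp [hq, h0]
      · rw [hq, if_neg h0, mul_smul_comm, Quaternion.star_mul_self, Quaternion.smul_coe]
        congr 1
        rw [Quaternion.normSq_eq_norm_mul_self]
        have hna : ‖a‖ ≠ 0 := norm_ne_zero_iff.mpr h0
        field_simp
    have key2 : normSq q = S := by
      by_cases h0 : a = 0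
      · rw [hq, if_pos h0, Quaternion.normSq_coe, hν]
      · rw [hq, if_neg h0, Quaternion.normSq_smul, Quaternion.normSq_eq_norm_mul_self]
        have hna : ‖a‖ ≠ 0 := norm_ne_zero_iff.mpr h0
        rw [← hν, div_pow, show ‖a‖ * ‖a‖ = ‖a‖ ^ 2 from (sq ‖a‖).symm]
        exact div_mul_cancel₀ _ (pow_ne_zero 2 hna)
    set w : Fin m → ℍ[ℝ] := fun i => v i - if i = km then q else 0 with hwdef
    have hw0 : ∀ l : Fin m, (l : ℕ) < k → w l = 0 := by
      intro l hl
      have hlkm : l ≠ km := by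
        intro h; rw [h] at hl; simp [hkmdef] at hl
      rw [hwdef]
      simp only [if_neg hlkm, sub_zero, hv]
      rw [if_neg (by omega)]
    set α : ℝ := 2 * (S - ν * ‖a‖) with hαdef
    have hwv : (∑ l, star (w l) * v l) = ((α / 2 : ℝ) : ℍ[ℝ]) := by
      have hterm : ∀ l, star (w l) * v l
          = star (v l) * v l - (if l = km then star q * v l else 0) := by
        intro l
        rw [hwdef]
        simp only [star_sub, sub_mul]
        congr 1
        split <;> simp
      rw [Finset.sum_congr rfl fun l _ => hterm l, Finset.sum_sub_distrib]
      rw [Finset.sum_ite_eq' Finset.univ km (fun l => star q * v l)]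
      rw [if_pos (Finset.mem_univ km), hva, key1]
      have : (∑ l, star (v l) * v l) = ((S : ℝ) : ℍ[ℝ]) := by
        rw [hSdef, quat_coe_sum]
        exact Finset.sum_congr rfl fun l _ => Quaternion.star_mul_self (v l)
      rw [this, ← Quaternion.coe_sub]
      congr 1
      rw [hαdef]; ring
    have hww : (∑ l, star (w l) * w l) = ((α : ℝ) : ℍ[ℝ]) := by
      have hterm : ∀ l, star (w l) * w l
          = star (w l) * v l - (if l = km then star (w km) * q else 0) := by
        intro l
        rw [hwdef]
        simp only [mul_sub]
        congr 1
        by_cases h : l = km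
        · subst h; simp [hwdef]
        · simp [h]
      rw [Finset.sum_congr rfl fun l _ => hterm l, Finset.sum_sub_distrib]
      rw [Finset.sum_ite_eq' Finset.univ km (fun _ => star (w km) * q)]
      rw [if_pos (Finset.mem_univ km), hwv]
      have hwkm : w km = a - q := by rw [hwdef]; simp [hva]
      have : star (w km) * q = ((ν * ‖a‖ - S : ℝ) : ℍ[ℝ]) := by
        rw [hwkm, star_sub, sub_mul, key1', Quaternion.star_mul_self, key2,
          ← Quaternion.coe_sub]
      rw [this, ← Quaternion.coe_sub]
      congr 1
      rw [hαdef]; ring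
    have halphaSum : α = ∑ l, normSq (w l) := by
      have h2 : (∑ l, star (w l) * w l) = (((∑ l, normSq (w l)) : ℝ) : ℍ[ℝ]) := by
        rw [quat_coe_sum]
        exact Finset.sum_congr rfl fun l _ => Quaternion.star_mul_self (w l)
      exact Quaternion.coe_injective (hww.symm.trans h2)
    have halpha0 : α = 0 → ∀ l, w l = 0 := by
      intro h0 l
      have hsum0 : (∑ l, normSq (w l)) = 0 := by rw [← halphaSum]; exact h0
      have := (Finset.sum_eq_zero_iff_of_nonneg
        (fun i _ => normSq_nonneg (a := w i))).mp hsum0 l (Finset.mem_univ l)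
      exact Quaternion.normSq_eq_zero.mp this
    set c : ℝ := 2 / α with hcdef
    set N : Matrix (Fin m) (Fin m) ℍ[ℝ] := Matrix.of fun i j => w i * star (w j) with hNdef
    set H : Matrix (Fin m) (Fin m) ℍ[ℝ] := 1 - c • N with hHdef
    have hHerm : Hᴴ = H := by
      rw [hHdef]
      refine Matrix.ext fun i j => ?_
      simp only [Matrix.conjTranspose_apply, Matrix.sub_apply, Matrix.smul_apply,
        Matrix.one_apply, hNdef, Matrix.of_apply]
      rw [star_sub, Quaternion.star_smul, StarMul.star_mul, star_star]
      congr 1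
      by_cases h : i = j
      · subst h; simp
      · rw [if_neg h, if_neg fun hh => h hh.symm, star_zero]
    have hNN : N * N = α • N := by
      refine Matrix.ext fun i j => ?_
      rw [Matrix.mul_apply, Matrix.smul_apply]
      simp only [hNdef, Matrix.of_apply]
      calc (∑ l, (w i * star (w l)) * (w l * star (w j)))
          = (w i * (∑ l, star (w l) * w l)) * star (w j) := by
            rw [Finset.mul_sum, Finset.sum_mul]
            exact Finset.sum_congr rfl fun l _ => by simp only [mul_assoc]
        _ = α • (w i * star (w j)) := by
            rw [hww, Quaternion.mul_coe_eq_smul, smul_mul_assoc]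
    have hHH : H * H = 1 := by
      have hexp : H * H = 1 - (2 * c) • N + (c * (c * α)) • N := by
        rw [hHdef]
        simp only [Matrix.sub_mul, Matrix.mul_sub, Matrix.one_mul, Matrix.mul_one,
          Matrix.smul_mul, Matrix.mul_smul, hNN, smul_smul]
        module
      by_cases hA : α = 0
      · have hN0 : N = 0 := by
          refine Matrix.ext fun i j => ?_
          simp [hNdef, halpha0 hA i]
        rw [hexp, hN0, smul_zero, smul_zero, sub_zero, add_zero]
      · have hc2 : c * (c * α) = 2 * c := by rw [hcdef]; field_simp
        rw [hexp, hc2]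
        module
    set u : ℍ[ℝ] := if q = 0 then 1 else (‖q‖⁻¹ : ℝ) • q with hu_def
    have hu : star u * u = 1 := by
      by_cases hq0 : q = 0
      · simp [hu_def, hq0]
      · rw [hu_def, if_neg hq0, Quaternion.star_smul, smul_mul_assoc, mul_smul_comm,
          Quaternion.star_mul_self, smul_smul, Quaternion.smul_coe,
          Quaternion.normSq_eq_norm_mul_self]
        have hnq : ‖q‖ ≠ 0 := norm_ne_zero_iff.mpr hq0
        rw [show ‖q‖⁻¹ * ‖q‖⁻¹ * (‖q‖ * ‖q‖) = 1 by field_simp]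
        exact Quaternion.coe_one
    set d : Fin m → ℍ[ℝ] := fun i => if i = km then u else 1 with hd_def
    have hdd1 : ∀ i, star (d i) * d i = 1 := by
      intro i
      simp only [hd_def]
      by_cases h : i = km
      · rw [if_pos h]; exact hu
      · rw [if_neg h]; simp
    set D := Matrix.diagonal d with hD_def
    have hDD : Dᴴ * D = 1 := by
      rw [hD_def, Matrix.diagonal_conjTranspose, Matrix.diagonal_mul_diagonal,
        ← Matrix.diagonal_one]
      exact congrArg Matrix.diagonal (funext fun i => hdd1 i)
    have hHT : ∀ (i : Fin m) (j : Fin n),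
        (H * T) i j = T i j - c • (w i * ∑ l, star (w l) * T l j) := by
      intro i j
      rw [Matrix.mul_apply]
      have hterm : ∀ l, H i l * T l j
          = (if l = i then T l j else 0) - c • (w i * (star (w l) * T l j)) := by
        intro l
        rw [hHdef]
        simp only [Matrix.sub_apply, Matrix.smul_apply, Matrix.one_apply, hNdef,
          Matrix.of_apply]
        rw [sub_mul, smul_mul_assoc]
        congr 2
        · by_cases h : i = l
          · subst h; rw [if_pos rfl, if_pos rfl, one_mul]
          · rw [if_neg h, if_neg fun hh => h hh.symm, zero_mul]
        · rw [mul_assoc]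
      rw [Finset.sum_congr rfl fun l _ => hterm l, Finset.sum_sub_distrib,
        Finset.sum_ite_eq' Finset.univ i (fun l => T l j), if_pos (Finset.mem_univ i)]
      congr 1
      rw [← Finset.smul_sum, ← Finset.mul_sum]
    have hkmval : (km : ℕ) = k := rfl
    have hkcval : (kc : ℕ) = k := rfl
    have hsumcol : (∑ l, star (w l) * T l kc) = ((α / 2 : ℝ) : ℍ[ℝ]) := by
      rw [← hwv]
      refine Finset.sum_congr rfl fun l _ => ?_
      by_cases h : k ≤ (l : ℕ)
      · have : v l = T l kc := by simp only [hv]; rw [if_pos h]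
        rw [this]
      · rw [hw0 l (by omega), star_zero, zero_mul, zero_mul]
    have hsumcolj : ∀ j : Fin n, (j : ℕ) < k → (∑ l, star (w l) * T l j) = 0 := by
      intro j hj
      refine Finset.sum_eq_zero fun l _ => ?_
      by_cases h : k ≤ (l : ℕ)
      · rw [hlow l j hj (by omega), mul_zero]
      · rw [hw0 l (by omega), star_zero, zero_mul]
    have hcolk : ∀ i : Fin m, k ≤ (i : ℕ) →
        (H * T) i kc = (if i = km then q else 0) := by
      intro i hi
      rw [hHT i kc, hsumcol, Quaternion.mul_coe_eq_smul, smul_smul]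
      have hvi : T i kc = v i := by simp only [hv]; rw [if_pos hi]
      rw [hvi]
      have hstep : v i - (c * (α / 2)) • w i = v i - w i := by
        by_cases hA : α = 0
        · simp [halpha0 hA i]
        · have : c * (α / 2) = 1 := by rw [hcdef]; field_simp
          rw [this, one_smul]
      rw [hstep]
      simp only [hwdef, sub_sub_cancel]
    have hWHD : (W * (H * D))ᴴ * Q = Dᴴ * (H * T) := by
      rw [Matrix.conjTranspose_mul, Matrix.conjTranspose_mul, hHerm]
      simp only [Matrix.mul_assoc]
      rfl
    have hDHT : ∀ (i : Fin m) (j : Fin n),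
        (Dᴴ * (H * T)) i j = star (d i) * (H * T) i j := by
      intro i j
      rw [hD_def, Matrix.diagonal_conjTranspose, Matrix.diagonal_mul]
      rfl
    have horth : (W * (H * D))ᴴ * (W * (H * D)) = 1 := by
      rw [Matrix.conjTranspose_mul, Matrix.conjTranspose_mul, hHerm]
      have h1 : ((Dᴴ * H) * Wᴴ) * (W * (H * D)) = Dᴴ * (H * ((Wᴴ * W) * (H * D))) := by
        simp only [Matrix.mul_assoc]
      rw [h1, hW, Matrix.one_mul, ← Matrix.mul_assoc H H D, hHH, Matrix.one_mul, hDD]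
    refine ⟨W * (H * D), horth, ?_, ?_⟩
    · intro i j hj hji
      rw [hWHD, hDHT]
      rcases Nat.lt_or_ge (j : ℕ) k with h | h
      · rw [hHT i j, hsumcolj j h, mul_zero, smul_zero, sub_zero, hlow i j h hji, mul_zero]
      · have hjk : (j : ℕ) = k := by omega
        have hjkc : j = kc := Fin.ext (by rw [hjk, hkcval])
        subst hjkc
        have hikm : i ≠ km := by
          intro hh; rw [hh, hkmval] at hji; omega
        rw [hcolk i (by omega), if_neg hikm, mul_zero]
    · intro i j hj hij
      rw [hWHD, hDHT]
      rcases Nat.lt_or_ge (j : ℕ) k with h | h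
      · have hik : (i : ℕ) < k := by omega
        have hikm : i ≠ km := by intro hh; rw [hh, hkmval] at hik; omega
        rw [hHT i j, hw0 i hik, zero_mul, smul_zero, sub_zero]
        obtain ⟨r, hr⟩ := hdiag i j h hij
        refine ⟨r, ?_⟩
        rw [hr]
        simp only [hd_def]
        rw [if_neg hikm, star_one, one_mul]
      · have hjk : (j : ℕ) = k := by omega
        have hjkc : j = kc := Fin.ext (by rw [hjk, hkcval])
        subst hjkc
        have hikm : i = km := Fin.ext (by rw [hkmval]; omega)
        subst hikm
        rw [hcolk km (le_of_eq hkmval.symm), if_pos rfl]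
        by_cases hq0 : q = 0
        · exact ⟨0, by rw [hq0, mul_zero, Quaternion.coe_zero]⟩
        · refine ⟨‖q‖⁻¹ * normSq q, ?_⟩
          simp only [hd_def, if_pos rfl, hu_def, if_neg hq0]
          rw [Quaternion.star_smul, smul_mul_assoc, Quaternion.star_mul_self,
            Quaternion.smul_coe]

/-- JRS-QR decomposition: every JRS-symmetric 4m×4n matrix can
be reduced to upper JRS-triangular form by an orthogonally JRS-symplectic
matrix. -/
theorem jrs_qr_decomposition {m n : ℕ}
    (M : Matrix (Fin 4 × Fin m) (Fin 4 × Fin n) ℝ) (hM : JRSSymmetric M) :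
    ∃ (W : Matrix (Fin 4 × Fin m) (Fin 4 × Fin m) ℝ)
      (R0 R1 R2 R3 : Matrix (Fin m) (Fin n) ℝ),
      OrthoJRSSymplectic W ∧
      Wᵀ * M = upsilonBlocks R0 R1 R2 R3 ∧
      UpperTriangularM R0 ∧
      StrictlyUpperTriangularM R1 ∧ StrictlyUpperTriangularM R2 ∧
      StrictlyUpperTriangularM R3 := by
  obtain ⟨Q, rfl⟩ := jrs_exists_Q M hM
  obtain ⟨Wq, hWq, hlow, hdiag⟩ := quat_qr_aux Q n
  set T := Wqᴴ * Q with hTdef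
  have hWt : (Upsilon Wq)ᵀ = Upsilon Wqᴴ := (Upsilon_conjTranspose Wq).symm
  have hOrt : (Upsilon Wq)ᵀ * Upsilon Wq = 1 := by
    rw [hWt, ← Upsilon_mul, hWq, Upsilon_one]
  have hOrt' : Upsilon Wq * (Upsilon Wq)ᵀ = 1 := mul_eq_one_comm.mp hOrt
  have hJc : JJ m * Upsilon Wq = Upsilon Wq * JJ m := kron_mul_Upsilon Jb Jb_phiQ Wq
  have hRc : RRm m * Upsilon Wq = Upsilon Wq * RRm m := kron_mul_Upsilon Rb Rb_phiQ Wq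
  have hSc : SSm m * Upsilon Wq = Upsilon Wq * SSm m := kron_mul_Upsilon Sb Sb_phiQ Wq
  refine ⟨Upsilon Wq, (fun i j => (T i j).re), (fun i j => (T i j).imI),
    (fun i j => (T i j).imJ), (fun i j => (T i j).imK),
    ⟨hOrt, ?_, ?_, ?_⟩, ?_, ?_, ?_, ?_, ?_⟩
  · rw [← hJc, Matrix.mul_assoc, hOrt', Matrix.mul_one]
  · rw [← hRc, Matrix.mul_assoc, hOrt', Matrix.mul_one]
  · rw [← hSc, Matrix.mul_assoc, hOrt', Matrix.mul_one]
  · rw [hWt, ← Upsilon_mul]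
    rfl
  · intro i j hji
    have hz := hlow i j j.isLt hji
    simp [hz]
  · intro i j hji
    rcases Nat.lt_or_ge (j : ℕ) (i : ℕ) with h | h
    · have hz := hlow i j j.isLt h
      simp [hz]
    · have hij : (i : ℕ) = (j : ℕ) := by omega
      obtain ⟨r, hr⟩ := hdiag i j j.isLt hij
      simp [hr]
  · intro i j hji
    rcases Nat.lt_or_ge (j : ℕ) (i : ℕ) with h | h
    · have hz := hlow i j j.isLt h
      simp [hz]
    · have hij : (i : ℕ) = (j : ℕ) := by omega
      obtain ⟨r, hr⟩ := hdiag i j j.isLt hij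
      simp [hr]
  · intro i j hji
    rcases Nat.lt_or_ge (j : ℕ) (i : ℕ) with h | h
    · have hz := hlow i j j.isLt h
      simp [hz]
    · have hij : (i : ℕ) = (j : ℕ) := by omega
      obtain ⟨r, hr⟩ := hdiag i j j.isLt hij
      simp [hr]
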